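/- Let α be irrational, γ > 0, τ > 1, and θ ∈ Θ_γ^τ. Then θ is Θ_{γ/100}^{100τ}-homogeneous: for all sufficiently small σ > 0, the Lebesgue measure of (θ - σ, θ + σ) ∩ Θ_{γ/100}^{100τ} is at least σ. -/

import Mathlib

open MeasureTheory Set

set_option maxHeartbeats 1000000

/-- Distance from a real number to the nearest integer, i.e. `‖x‖_{ℝ/ℤ}`. -/
noncomputable def distZ (x : ℝ) : ℝ := |x - round x|

lemma round_eq_of_abs_lt_half {c : ℝ} {m : ℤ} (h : |c - m| < 1/2) : round c = m := by
  rw [round_eq, Int.floor_eq_iff]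
  rw [abs_lt] at h
  constructor <;> · push_cast; linarith

lemma summable_aux : Summable (fun k : ℤ => 1 / (|(k : ℝ)| + 1) ^ 2) := by
  have h : Summable (fun n : ℕ => 1 / ((n : ℝ) + 1) ^ 2) := by
    have h2 : Summable (fun n : ℕ => 1 / ((n : ℝ)) ^ 2) :=
      Real.summable_one_div_nat_pow.mpr one_lt_two
    have := (summable_nat_add_iff 1).mpr h2
    simpa using this
  apply Summable.of_nat_of_neg <;> simpa using h

/-- If `θ ∈ Θ_γ^τ`, then `θ` is `Θ_{γ/100}^{100τ}`-homogeneous: for all sufficiently small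
`σ > 0`, the measure of `(θ-σ, θ+σ) ∩ Θ_{γ/100}^{100τ}` is at least `σ`. -/
theorem stmt2 (α : ℝ) (hα : Irrational α) (γ τ θ : ℝ) (hγ : 0 < γ) (hτ : 1 < τ)
    (hθmem : θ ∈ Ioo (0 : ℝ) 1)
    (hθ : ∀ k : ℤ, γ / (|(k : ℝ)| + 1) ^ τ < distZ (2 * θ + k * α)) :
    ∃ σ₀ : ℝ, 0 < σ₀ ∧ ∀ σ : ℝ, 0 < σ → σ < σ₀ →
      ENNReal.ofReal σ ≤
        volume (Ioo (θ - σ) (θ + σ) ∩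
          {x : ℝ | x ∈ Ioo (0 : ℝ) 1 ∧
            ∀ k : ℤ, γ / 100 / (|(k : ℝ)| + 1) ^ (100 * τ) < distZ (2 * x + k * α)}) := by
  obtain ⟨hθ0, hθ1⟩ := hθmem
  set B : ℝ := ∑' k : ℤ, 1 / (|(k : ℝ)| + 1) ^ 2 with hBdef
  have hB0 : 0 ≤ B := tsum_nonneg (fun k => by positivity)
  -- basic facts about N k := |(k:ℝ)| + 1
  have hN1 : ∀ k : ℤ, (1 : ℝ) ≤ |(k : ℝ)| + 1 := fun k => by
    have := abs_nonneg ((k : ℝ)); linarith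
  have hN0 : ∀ k : ℤ, (0 : ℝ) < |(k : ℝ)| + 1 := fun k => lt_of_lt_of_le one_pos (hN1 k)
  -- γ < 1/2
  have hγhalf : γ < 1/2 := by
    have h0 := hθ 0
    simp only [Int.cast_zero, abs_zero, zero_add, zero_mul, add_zero, Real.one_rpow] at h0
    have : distZ (2 * θ) ≤ 1/2 := abs_sub_round (2 * θ)
    simp only [div_one] at h0
    linarith
  refine ⟨min (min θ (1 - θ)) (min (1/8) (100 * γ / (16 * (B + 1)))), ?_, ?_⟩
  · have : (0:ℝ) < 100 * γ / (16 * (B + 1)) := by positivity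
    simp only [lt_min_iff]
    refine ⟨⟨hθ0, by linarith⟩, by norm_num, this⟩
  intro σ hσ hσlt
  simp only [lt_min_iff] at hσlt
  obtain ⟨⟨hσθ, hσθ1⟩, hσ8, hσB⟩ := hσlt
  have hσB' : σ * (16 * (B + 1)) < 100 * γ := by
    rwa [lt_div_iff₀ (by positivity)] at hσB
  -- the covering sets
  set I : Set ℝ := Ioo (θ - σ) (θ + σ) with hIdef
  set S : Set ℝ := {x : ℝ | x ∈ Ioo (0 : ℝ) 1 ∧
      ∀ k : ℤ, γ / 100 / (|(k : ℝ)| + 1) ^ (100 * τ) < distZ (2 * x + k * α)} with hSdef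
  set ε : ℤ → ℝ := fun k => γ / 100 / (|(k : ℝ)| + 1) ^ (100 * τ) with hεdef
  have hεpos : ∀ k, 0 < ε k := fun k => by
    have := hN0 k
    have : (0:ℝ) < (|(k : ℝ)| + 1) ^ (100 * τ) := Real.rpow_pos_of_pos this _
    positivity
  have hεle : ∀ k, ε k ≤ γ / 100 := by
    intro k
    have h1 : (1:ℝ) ≤ (|(k : ℝ)| + 1) ^ (100 * τ) :=
      Real.one_le_rpow (hN1 k) (by nlinarith)
    calc ε k = γ / 100 / (|(k : ℝ)| + 1) ^ (100 * τ) := rfl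
      _ ≤ γ / 100 / 1 := by
          apply div_le_div_of_nonneg_left (by positivity) one_pos h1
      _ = γ / 100 := by ring
  set C : ℤ → Set ℝ := fun k =>
    if γ < 4 * σ * (|(k : ℝ)| + 1) ^ τ then
      Metric.closedBall (((round (2 * θ + k * α) : ℝ) - k * α) / 2) (ε k / 2)
    else ∅ with hCdef
  -- inclusion
  have hsub : I \ S ⊆ ⋃ k, C k := by
    intro x hx
    obtain ⟨hxI, hxS⟩ := hx
    obtain ⟨hxl, hxr⟩ := hxI
    have hx01 : x ∈ Ioo (0:ℝ) 1 := ⟨by linarith, by linarith⟩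
    rw [hSdef, mem_setOf_eq, not_and] at hxS
    obtain ⟨k, hk⟩ := not_forall.mp (hxS hx01)
    rw [not_lt] at hk
    -- hk : distZ (2x + kα) ≤ ε k
    have hdist : distZ (2 * θ + k * α) ≤ distZ (2 * x + k * α) + 2 * σ := by
      have h1 : distZ (2 * θ + k * α) ≤ |2 * θ + k * α - (round (2 * x + k * α) : ℤ)| :=
        round_le _ _
      have h2 : |2 * θ + k * α - (round (2 * x + k * α) : ℤ)| ≤
          |2 * θ + k * α - (2 * x + k * α)| + |2 * x + k * α - (round (2 * x + k * α) : ℤ)| :=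
        abs_sub_le _ _ _
      have h3 : |2 * θ + k * α - (2 * x + k * α)| ≤ 2 * σ := by
        rw [abs_le]; constructor <;> [nlinarith; nlinarith]
      have h4 : distZ (2 * x + k * α) = |2 * x + k * α - (round (2 * x + k * α) : ℤ)| := rfl
      push_cast at h1 h2 ⊢
      rw [h4]; push_cast; linarith
    by_cases hbig : γ < 4 * σ * (|(k : ℝ)| + 1) ^ τ
    · -- x ∈ C k
      refine mem_iUnion.mpr ⟨k, ?_⟩
      rw [hCdef]
      simp only [if_pos hbig]
      set m : ℤ := round (2 * x + k * α) with hm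
      have hkdist : |2 * x + k * α - (m : ℝ)| ≤ ε k := hk
      have hmθ : |2 * θ + k * α - (m : ℝ)| < 1/2 := by
        have h3 : |2 * θ + k * α - (2 * x + k * α)| ≤ 2 * σ := by
          rw [abs_le]; constructor <;> nlinarith
        have := abs_sub_le (2 * θ + k * α) (2 * x + k * α) (m : ℝ)
        have hεk := hεle k
        linarith
      have hround : round (2 * θ + k * α) = m := round_eq_of_abs_lt_half hmθ
      rw [hround, Metric.mem_closedBall, Real.dist_eq]
      have heq : x - ((m : ℝ) - k * α) / 2 = (2 * x + k * α - (m : ℝ)) / 2 := by ring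
      rw [heq, abs_div, abs_two]
      linarith
    · -- contradiction for small k
      exfalso
      rw [not_lt] at hbig
      have hτpos : (0:ℝ) < τ := by linarith
      have hrpos : (0:ℝ) < (|(k : ℝ)| + 1) ^ τ := Real.rpow_pos_of_pos (hN0 k) _
      have h2σ : 2 * σ ≤ γ / (2 * (|(k : ℝ)| + 1) ^ τ) := by
        rw [le_div_iff₀ (by positivity)]; nlinarith
      have hεk : ε k ≤ γ / 100 / (|(k : ℝ)| + 1) ^ τ := by
        apply div_le_div_of_nonneg_left (by positivity) hrpos
        apply Real.rpow_le_rpow_of_exponent_le (hN1 k)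
        nlinarith
      have hθk := hθ k
      have hP : (0:ℝ) < γ / (|(k : ℝ)| + 1) ^ τ := by positivity
      have e1 : γ / 100 / (|(k : ℝ)| + 1) ^ τ = (γ / (|(k : ℝ)| + 1) ^ τ) / 100 := by ring
      have e2 : γ / (2 * (|(k : ℝ)| + 1) ^ τ) = (γ / (|(k : ℝ)| + 1) ^ τ) / 2 := by ring
      rw [e1] at hεk
      rw [e2] at h2σ
      linarith
  -- measure of each C k
  have hmeasC : ∀ k, volume (C k) ≤ ENNReal.ofReal ((16 * σ^2 / (100 * γ)) * (1 / (|(k : ℝ)| + 1) ^ 2)) := by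
    intro k
    rw [hCdef]
    by_cases hbig : γ < 4 * σ * (|(k : ℝ)| + 1) ^ τ
    · simp only [if_pos hbig]
      rw [Real.volume_closedBall]
      apply ENNReal.ofReal_le_ofReal
      set N := |(k : ℝ)| + 1 with hNdef
      have hNpos : (0:ℝ) < N := hN0 k
      have hNone : (1:ℝ) ≤ N := hN1 k
      have hNτ : γ / (4 * σ) < N ^ τ := by
        rw [div_lt_iff₀ (by positivity)]; nlinarith
      have hTpos : (0:ℝ) < N ^ τ := Real.rpow_pos_of_pos hNpos τ
      have hA : N ^ (100*τ) = N ^ τ * N ^ τ * N ^ (((2:ℕ)):ℝ) * N ^ (98*τ - 2) := by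
        rw [← Real.rpow_add hNpos, ← Real.rpow_add hNpos, ← Real.rpow_add hNpos]
        congr 1
        push_cast
        ring
      have hB2 : N ^ (((2:ℕ)):ℝ) = N ^ (2:ℕ) := Real.rpow_natCast N 2
      have hr1 : (1:ℝ) ≤ N ^ (98*τ - 2) := Real.one_le_rpow hNone (by linarith)
      have hN2pos : (0:ℝ) < N ^ (2:ℕ) := by positivity
      have hsq : γ^2/(16*σ^2) < (N^τ) * (N^τ) := by
        have h0 : (0:ℝ) < γ/(4*σ) := by positivity
        have h1 : (γ/(4*σ))*(γ/(4*σ)) < N^τ * N^τ :=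
          mul_lt_mul'' hNτ hNτ (le_of_lt h0) (le_of_lt h0)
        have h2 : γ^2/(16*σ^2) = (γ/(4*σ))*(γ/(4*σ)) := by ring
        linarith
      have hden : γ^2/(16*σ^2) * N^(2:ℕ) ≤ N ^ (100*τ) := by
        rw [hA, hB2]
        calc γ^2/(16*σ^2) * N^(2:ℕ) ≤ (N^τ*N^τ) * N^(2:ℕ) :=
              mul_le_mul_of_nonneg_right (le_of_lt hsq) (le_of_lt hN2pos)
          _ ≤ N^τ*N^τ*N^(2:ℕ) * N^(98*τ-2) := le_mul_of_one_le_right (by positivity) hr1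
      have hdenpos : (0:ℝ) < γ^2/(16*σ^2) * N^(2:ℕ) := by positivity
      have hγne : γ ≠ 0 := ne_of_gt hγ
      have hσne : σ ≠ 0 := ne_of_gt hσ
      have hNne : N ≠ 0 := ne_of_gt hNpos
      calc 2 * (ε k / 2) = γ / 100 / N ^ (100 * τ) := by rw [hεdef]; ring
        _ ≤ γ / 100 / (γ^2/(16*σ^2) * N^(2:ℕ)) :=
            div_le_div_of_nonneg_left (by positivity) hdenpos hden
        _ = 16 * σ^2 / (100 * γ) * (1 / N ^ (2:ℕ)) := by
            field_simp
    · simp only [if_neg hbig, measure_empty]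
      positivity
  -- total measure
  have hsum : volume (I \ S) ≤ ENNReal.ofReal σ := by
    calc volume (I \ S) ≤ volume (⋃ k, C k) := measure_mono hsub
      _ ≤ ∑' k : ℤ, volume (C k) := measure_iUnion_le _
      _ ≤ ∑' k : ℤ, ENNReal.ofReal ((16 * σ^2 / (100 * γ)) * (1 / (|(k : ℝ)| + 1) ^ 2)) :=
          ENNReal.tsum_le_tsum hmeasC
      _ = ENNReal.ofReal (∑' k : ℤ, (16 * σ^2 / (100 * γ)) * (1 / (|(k : ℝ)| + 1) ^ 2)) := by
          rw [ENNReal.ofReal_tsum_of_nonneg (fun k => by positivity)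
            (summable_aux.mul_left _)]
      _ = ENNReal.ofReal ((16 * σ^2 / (100 * γ)) * B) := by rw [tsum_mul_left]
      _ ≤ ENNReal.ofReal σ := by
          apply ENNReal.ofReal_le_ofReal
          rw [div_mul_eq_mul_div, div_le_iff₀ (by positivity)]
          nlinarith
  have hIvol : volume I = ENNReal.ofReal (2 * σ) := by
    rw [hIdef, Real.volume_Ioo]
    congr 1
    ring
  have hmain := measure_le_inter_add_diff volume I S
  rw [hIvol] at hmain
  have h2σ : ENNReal.ofReal (2 * σ) = ENNReal.ofReal σ + ENNReal.ofReal σ := by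
    rw [← ENNReal.ofReal_add (le_of_lt hσ) (le_of_lt hσ)]
    congr 1
    ring
  rw [h2σ] at hmain
  have hfin : volume (I ∩ S) + ENNReal.ofReal σ ≥ ENNReal.ofReal σ + ENNReal.ofReal σ :=
    le_trans hmain (add_le_add_right hsum _)
  have := (ENNReal.add_le_add_iff_right ENNReal.ofReal_ne_top).mp hfin
  exact this
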